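/- Let Γ ⊆ ℤ² be a finite set. For every state φ on Γ there is no infinite legal toppling sequence for φ; equivalently, every legal toppling sequence for φ terminates after finitely many steps. -/

import Mathlib

/-- The discrete Laplacian on `ℤ × ℤ`: sum over the four grid neighbors minus `4` times
the value at the point. -/
def lap (H : ℤ × ℤ → ℤ) (v : ℤ × ℤ) : ℤ :=
  H (v.1 + 1, v.2) + H (v.1 - 1, v.2) + H (v.1, v.2 + 1) + H (v.1, v.2 - 1) - 4 * H v

/-- `topCount s i u` is the number of indices `j < i` with `s j = u`
(the toppling count after `i` steps). -/
def topCount (s : ℕ → ℤ × ℤ) (i : ℕ) (u : ℤ × ℤ) : ℤ :=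
  (((Finset.range i).filter (fun j => s j = u)).card : ℤ)

/-- The first `m` terms of `s` form a legal toppling sequence for the state `φ` on `Γ`:
each toppled vertex lies in `Γ` and is unstable (has ≥ 4 grains) at the moment of toppling. -/
def Legal (Γ : Set (ℤ × ℤ)) (φ : ℤ × ℤ → ℤ) (s : ℕ → ℤ × ℤ) (m : ℕ) : Prop :=
  ∀ i < m, s i ∈ Γ ∧ 4 ≤ φ (s i) + lap (topCount s i) (s i)


lemma topCount_nonneg (s : ℕ → ℤ × ℤ) (i : ℕ) (u : ℤ × ℤ) : 0 ≤ topCount s i u := by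
  simp [topCount]

lemma topCount_succ (s : ℕ → ℤ × ℤ) (i : ℕ) (u : ℤ × ℤ) :
    topCount s (i+1) u = topCount s i u + (if s i = u then 1 else 0) := by
  unfold topCount
  rw [Finset.range_add_one, Finset.filter_insert]
  split
  · rw [Finset.card_insert_of_notMem (by simp)]
    push_cast; ring
  · simp

lemma lap_topCount_succ (s : ℕ → ℤ × ℤ) (i : ℕ) (v : ℤ × ℤ) :
    lap (topCount s (i+1)) v = lap (topCount s i) v
      + ((if s i = (v.1+1, v.2) then 1 else 0) + (if s i = (v.1-1, v.2) then 1 else 0)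
        + (if s i = (v.1, v.2+1) then 1 else 0) + (if s i = (v.1, v.2-1) then 1 else 0))
      - 4 * (if s i = v then 1 else 0) := by
  simp only [lap, topCount_succ]
  ring

lemma ite_one_nonneg (p : Prop) [Decidable p] : (0:ℤ) ≤ (if p then 1 else 0) := by
  split <;> norm_num

lemma sum_supp (H : ℤ × ℤ → ℤ) (A B : Finset (ℤ × ℤ)) (hA : ∀ u, H u ≠ 0 → u ∈ A)
    (hB : ∀ u, H u ≠ 0 → u ∈ B) : ∑ v ∈ A, H v = ∑ v ∈ B, H v := by
  have h1 : ∑ v ∈ A, H v = ∑ v ∈ A ∪ B, H v :=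
    Finset.sum_subset Finset.subset_union_left
      (fun x _ hx => by by_contra h; exact hx (hA x h))
  have h2 : ∑ v ∈ B, H v = ∑ v ∈ A ∪ B, H v :=
    Finset.sum_subset Finset.subset_union_right
      (fun x _ hx => by by_contra h; exact hx (hB x h))
  rw [h1, h2]

lemma sum_shift (H : ℤ × ℤ → ℤ) (G T : Finset (ℤ × ℤ)) (e : ℤ × ℤ)
    (hsupp : ∀ u, H u ≠ 0 → u ∈ G) (hsub : G.image (· + (-e)) ⊆ T) :
    ∑ v ∈ T, H (v + e) = ∑ w ∈ G, H w := by
  have hmem : ∀ u : ℤ × ℤ, H (u + e) ≠ 0 → u ∈ G.image (· + (-e)) := by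
    intro u hu
    refine Finset.mem_image.mpr ⟨u + e, hsupp _ hu, by abel⟩
  have h1 : ∑ v ∈ T, H (v + e) = ∑ v ∈ G.image (· + (-e)), H (v + e) :=
    sum_supp (fun v => H (v + e)) T (G.image (· + (-e)))
      (fun u hu => hsub (hmem u hu)) hmem
  rw [h1, Finset.sum_image (fun a _ b _ h => by simpa using congrArg (· + e) h)]
  apply Finset.sum_congr rfl
  intro w _
  congr 1
  abel

lemma sum_lap_eq_zero (H : ℤ × ℤ → ℤ) (G T : Finset (ℤ × ℤ))
    (hsupp : ∀ u, H u ≠ 0 → u ∈ G)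
    (hT0 : G ⊆ T)
    (hT1 : G.image (· + ((1:ℤ),(0:ℤ))) ⊆ T) (hT2 : G.image (· + ((-1:ℤ),(0:ℤ))) ⊆ T)
    (hT3 : G.image (· + ((0:ℤ),(1:ℤ))) ⊆ T) (hT4 : G.image (· + ((0:ℤ),(-1:ℤ))) ⊆ T) :
    ∑ v ∈ T, lap H v = 0 := by
  have hlap : ∀ v : ℤ × ℤ, lap H v =
      H (v + (1,0)) + H (v + (-1,0)) + H (v + (0,1)) + H (v + (0,-1)) - 4 * H v := by
    rintro ⟨x, y⟩
    simp [lap, Prod.mk_add_mk, sub_eq_add_neg]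
  have e1 : ∑ v ∈ T, H (v + ((1:ℤ),(0:ℤ))) = ∑ w ∈ G, H w := by
    apply sum_shift H G T _ hsupp
    convert hT2 using 3
    simp
  have e2 : ∑ v ∈ T, H (v + ((-1:ℤ),(0:ℤ))) = ∑ w ∈ G, H w := by
    apply sum_shift H G T _ hsupp
    convert hT1 using 3
    simp
  have e3 : ∑ v ∈ T, H (v + ((0:ℤ),(1:ℤ))) = ∑ w ∈ G, H w := by
    apply sum_shift H G T _ hsupp
    convert hT4 using 3
    simp
  have e4 : ∑ v ∈ T, H (v + ((0:ℤ),(-1:ℤ))) = ∑ w ∈ G, H w := by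
    apply sum_shift H G T _ hsupp
    convert hT3 using 3
    simp
  have e0 : ∑ v ∈ T, H v = ∑ w ∈ G, H w :=
    (sum_supp H G T hsupp (fun u hu => hT0 (hsupp u hu))).symm
  calc ∑ v ∈ T, lap H v
      = ∑ v ∈ T, (H (v + (1,0)) + H (v + (-1,0)) + H (v + (0,1)) + H (v + (0,-1)) - 4 * H v) :=
        Finset.sum_congr rfl (fun v _ => hlap v)
    _ = (∑ v ∈ T, H (v + ((1:ℤ),(0:ℤ)))) + (∑ v ∈ T, H (v + ((-1:ℤ),(0:ℤ))))
        + (∑ v ∈ T, H (v + ((0:ℤ),(1:ℤ)))) + (∑ v ∈ T, H (v + ((0:ℤ),(-1:ℤ))))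
        - 4 * ∑ v ∈ T, H v := by
        simp [Finset.sum_add_distrib, Finset.sum_sub_distrib, Finset.mul_sum]
    _ = 0 := by rw [e1, e2, e3, e4, e0]; ring

lemma val_nonneg (Γ : Set (ℤ × ℤ)) (φ : ℤ × ℤ → ℤ) (s : ℕ → ℤ × ℤ)
    (hφ0 : ∀ v, 0 ≤ φ v)
    (hleg : ∀ i, s i ∈ Γ ∧ 4 ≤ φ (s i) + lap (topCount s i) (s i)) :
    ∀ i v, 0 ≤ φ v + lap (topCount s i) v := by
  intro i
  induction i with
  | zero =>
    intro v
    simpa [topCount, lap] using hφ0 v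
  | succ i ih =>
    intro v
    rw [lap_topCount_succ]
    have h1 := ite_one_nonneg (s i = (v.1+1, v.2))
    have h2 := ite_one_nonneg (s i = (v.1-1, v.2))
    have h3 := ite_one_nonneg (s i = (v.1, v.2+1))
    have h4 := ite_one_nonneg (s i = (v.1, v.2-1))
    by_cases h : s i = v
    · have h5 := (hleg i).2
      subst h
      rw [if_pos rfl]
      linarith
    · have h6 := ih v
      rw [if_neg h]
      linarith

/-- On a finite `Γ ⊆ ℤ²` every legal toppling sequence terminates: there is no infinite
legal toppling sequence for any state `φ` on `Γ`. -/
theorem no_infinite_legal_sequence (Γ : Set (ℤ × ℤ)) (hΓ : Γ.Finite) (φ : ℤ × ℤ → ℤ)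
    (hφ0 : ∀ v, 0 ≤ φ v) (hφΓ : ∀ v, v ∉ Γ → φ v = 0) :
    ¬ ∃ s : ℕ → ℤ × ℤ, ∀ m : ℕ, Legal Γ φ s m := by
  classical
  rintro ⟨s, hs⟩
  have hleg : ∀ i, s i ∈ Γ ∧ 4 ≤ φ (s i) + lap (topCount s i) (s i) :=
    fun i => hs (i+1) i (Nat.lt_succ_self i)
  set G : Finset (ℤ × ℤ) := hΓ.toFinset with hG
  set T : Finset (ℤ × ℤ) := G ∪ G.image (· + ((1:ℤ),(0:ℤ))) ∪ G.image (· + ((-1:ℤ),(0:ℤ)))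
    ∪ G.image (· + ((0:ℤ),(1:ℤ))) ∪ G.image (· + ((0:ℤ),(-1:ℤ))) with hT
  -- support of topCount is in G
  have hsupp : ∀ i u, topCount s i u ≠ 0 → u ∈ G := by
    intro i u h
    have : ((Finset.range i).filter (fun j => s j = u)).Nonempty := by
      rw [Finset.nonempty_iff_ne_empty]
      intro hemp
      exact h (by simp [topCount, hemp])
    obtain ⟨j, hj⟩ := this
    have := (Finset.mem_filter.mp hj).2
    rw [hG, Set.Finite.mem_toFinset]
    exact this ▸ (hleg j).1
  -- conservation
  have hcons : ∀ i, ∑ v ∈ T, (φ v + lap (topCount s i) v) = ∑ v ∈ T, φ v := by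
    intro i
    rw [Finset.sum_add_distrib, sum_lap_eq_zero (topCount s i) G T (hsupp i)
      (by rw [hT]; intro x hx; simp [hx])
      (by rw [hT]; intro x hx; simp at hx ⊢; tauto)
      (by rw [hT]; intro x hx; simp at hx ⊢; tauto)
      (by rw [hT]; intro x hx; simp at hx ⊢; tauto)
      (by rw [hT]; intro x hx; simp at hx ⊢; tauto), add_zero]
  have hnn := val_nonneg Γ φ s hφ0 hleg
  set M : ℤ := ∑ v ∈ T, φ v with hM
  have hub : ∀ i v, v ∈ T → φ v + lap (topCount s i) v ≤ M := by
    intro i v hv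
    calc φ v + lap (topCount s i) v ≤ ∑ u ∈ T, (φ u + lap (topCount s i) u) :=
          Finset.single_le_sum (fun u _ => hnn i u) hv
      _ = M := hcons i
  -- growth from infinite fibers
  have hgrow : ∀ v : ℤ × ℤ, {j | s j = v}.Infinite → ∀ n : ℕ, ∃ i, (n:ℤ) ≤ topCount s i v := by
    intro v hv n
    obtain ⟨F, hFsub, hFcard⟩ := hv.exists_subset_card_eq n
    refine ⟨F.sup id + 1, ?_⟩
    have hsub : F ⊆ (Finset.range (F.sup id + 1)).filter (fun j => s j = v) := by
      intro j hj
      refine Finset.mem_filter.mpr ⟨Finset.mem_range.mpr (Nat.lt_succ_of_le ?_), hFsub hj⟩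
      exact Finset.le_sup (f := id) hj
    have := Finset.card_le_card hsub
    rw [hFcard] at this
    simp only [topCount]
    exact_mod_cast this
  -- propagation to east neighbor
  have hprop : ∀ v : ℤ × ℤ, {j | s j = v}.Infinite → {j | s j = (v.1 + 1, v.2)}.Infinite := by
    intro v hv
    by_contra hcon
    rw [Set.not_infinite] at hcon
    set u : ℤ × ℤ := (v.1 + 1, v.2) with hu
    set C : ℤ := (hcon.toFinset.card : ℤ) with hC
    have hvG : v ∈ G := by
      obtain ⟨j, hj⟩ := hv.nonempty
      rw [hG, Set.Finite.mem_toFinset]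
      exact hj ▸ (hleg j).1
    have huT : u ∈ T := by
      rw [hT]
      have : u ∈ G.image (· + ((1:ℤ),(0:ℤ))) :=
        Finset.mem_image.mpr ⟨v, hvG, by simp [hu, Prod.ext_iff]⟩
      simp at this ⊢; tauto
    have hCb : ∀ i, topCount s i u ≤ C := by
      intro i
      have hsub : (Finset.range i).filter (fun j => s j = u) ⊆ hcon.toFinset := by
        intro j hj
        rw [Set.Finite.mem_toFinset]
        exact (Finset.mem_filter.mp hj).2
      have := Finset.card_le_card hsub
      simp only [topCount, hC]
      exact_mod_cast this
    obtain ⟨i, hi⟩ := hgrow v hv (M + 4 * C + 1).toNat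
    have hi' : M + 4 * C + 1 ≤ topCount s i v := le_trans (Int.self_le_toNat _) hi
    -- lower bound on value at u
    have hkey : topCount s i v - 4 * C ≤ φ u + lap (topCount s i) u := by
      have e1 : (u.1 - 1, u.2) = v := by simp [hu]
      have n1 := topCount_nonneg s i (u.1 + 1, u.2)
      have n3 := topCount_nonneg s i (u.1, u.2 + 1)
      have n4 := topCount_nonneg s i (u.1, u.2 - 1)
      have hphi := hφ0 u
      have hcb := hCb i
      rw [lap, e1]
      linarith
    have := hub i u huT
    linarith
  -- some vertex topples infinitely often
  have hex : ∃ v : ℤ × ℤ, {j | s j = v}.Infinite := by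
    by_contra hcon
    push_neg at hcon
    have hcover : (Set.univ : Set ℕ) ⊆ ⋃ v ∈ (G : Set (ℤ × ℤ)), {j | s j = v} := by
      intro j _
      refine Set.mem_biUnion ?_ rfl
      rw [hG]; simp only [Finset.coe_sort_coe, Finset.mem_coe, Set.Finite.mem_toFinset]
      exact (hleg j).1
    have : (Set.univ : Set ℕ).Finite :=
      (Set.Finite.biUnion (G.finite_toSet) (fun v _ => hcon v)).subset hcover
    exact Set.infinite_univ this
  obtain ⟨v, hv⟩ := hex
  have hall : ∀ n : ℕ, {j | s j = (v.1 + n, v.2)}.Infinite := by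
    intro n
    induction n with
    | zero => simpa using hv
    | succ n ih =>
      have := hprop _ ih
      have he : ((v.1 + (n:ℤ)) + 1, v.2) = (v.1 + ((n:ℕ)+1 : ℕ), v.2) := by
        simp [Prod.ext_iff]; push_cast; ring
      rw [he] at this
      exact this
  have hmem : ∀ n : ℕ, ((v.1 + n, v.2) : ℤ × ℤ) ∈ Γ := by
    intro n
    obtain ⟨j, hj⟩ := (hall n).nonempty
    exact hj ▸ (hleg j).1
  have hinj : Function.Injective (fun n : ℕ => ((v.1 + n, v.2) : ℤ × ℤ)) := by
    intro a b hab
    simp [Prod.ext_iff] at hab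
    exact_mod_cast hab
  exact (Set.infinite_of_injective_forall_mem hinj hmem) hΓ
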